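/- Let H be a uniformly random m × n matrix over F_q, and let E, E' ⊂ {1,...,n} with |E| = i, |E'| = i', |E ∩ E'| = s, where i, i' ≤ m. Then the probability that both H_E has rank i and H_{E'} has rank i' equals ψ_m(i)·ψ_m(i')/ψ_m(s). -/

import Mathlib

/-- `ψ_m(j) = ∏_{k=0}^{j-1} (1 - q^{k-m})`. -/
noncomputable def psi (q : ℝ) (m j : ℕ) : ℝ :=
  ∏ k ∈ Finset.range j, (1 - q ^ ((k : ℤ) - (m : ℤ)))


open Finset

section Aux

variable {F : Type} [Field F] [Fintype F] {m : ℕ}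

private lemma cardV (m : ℕ) : Fintype.card (Fin m → F) = Fintype.card F ^ m := by
  simp [Fintype.card_fun]

private lemma card_compl_span {t : ℕ} (v : Fin t → (Fin m → F))
    (hv : LinearIndependent F v) :
    Nat.card {x : Fin m → F // x ∉ Submodule.span F (Set.range v)} =
      Fintype.card F ^ m - Fintype.card F ^ t := by
  classical
  have h1 : {x : Fin m → F // x ∉ Submodule.span F (Set.range v)} ≃
      ↥((Submodule.span F (Set.range v) : Set (Fin m → F))ᶜ) :=
    Equiv.subtypeEquivRight (fun x => by simp)
  rw [Nat.card_congr h1, Nat.card_eq_fintype_card, Fintype.card_compl_set, cardV]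
  congr 1
  rw [Module.card_eq_pow_finrank (K := F)
    (V := ((Submodule.span F (Set.range v) : Set (Fin m → F))))]
  simp [finrank_span_eq_card hv]

private def pairSigmaEquiv {α β : Type*} (Q : α → Prop) (R : α → β → Prop) :
    {p : β × α // Q p.2 ∧ R p.2 p.1} ≃ Σ d : {d // Q d}, {x // R d.1 x} where
  toFun p := ⟨⟨p.1.2, p.2.1⟩, ⟨p.1.1, p.2.2⟩⟩
  invFun z := ⟨(z.2.1, z.1.1), z.1.2, z.2.2⟩
  left_inv := by rintro ⟨⟨x, d⟩, h⟩; rfl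
  right_inv := by rintro ⟨⟨d, hd⟩, ⟨x, hx⟩⟩; rfl

private lemma ext_fin (t : ℕ) (c : Fin t → (Fin m → F)) (hc : LinearIndependent F c) :
    ∀ a : ℕ, Nat.card {d : Fin a → (Fin m → F) //
        LinearIndependent F (Fin.append c d)} =
      ∏ k ∈ range a, (Fintype.card F ^ m - Fintype.card F ^ (t + k))
  | 0 => by
    have hu : ∀ d : Fin 0 → (Fin m → F), LinearIndependent F (Fin.append c d) := by
      intro d
      have hd : d = Fin.elim0 := funext fun x => x.elim0
      subst hd
      rw [Fin.append_elim0]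
      exact hc.comp _ (Fin.cast_injective _)
    haveI : Unique {d : Fin 0 → (Fin m → F) // LinearIndependent F (Fin.append c d)} :=
      { default := ⟨Fin.elim0, hu _⟩
        uniq := fun d => Subtype.ext (funext fun x => x.elim0) }
    simp [Nat.card_unique]
  | (a + 1) => by
    classical
    have key : ∀ p : (Fin m → F) × (Fin a → (Fin m → F)),
        (LinearIndependent F (Fin.append c p.2) ∧
          p.1 ∉ Submodule.span F (Set.range (Fin.append c p.2))) ↔
        LinearIndependent F
          (Fin.append c (Fin.snocEquiv (fun _ => Fin m → F) p)) := by
      intro p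
      have : Fin.snocEquiv (fun _ => Fin m → F) p = Fin.snoc p.2 p.1 := rfl
      rw [this, Fin.append_snoc, linearIndependent_fin_snoc]
    have e1 : {p : (Fin m → F) × (Fin a → (Fin m → F)) //
          LinearIndependent F (Fin.append c p.2) ∧
          p.1 ∉ Submodule.span F (Set.range (Fin.append c p.2))} ≃
        {d : Fin (a + 1) → (Fin m → F) // LinearIndependent F (Fin.append c d)} :=
      Equiv.subtypeEquiv (Fin.snocEquiv (fun _ => Fin m → F)) key
    rw [← Nat.card_congr e1,
      Nat.card_congr (pairSigmaEquiv
        (fun d : Fin a → (Fin m → F) => LinearIndependent F (Fin.append c d))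
        (fun d x => x ∉ Submodule.span F (Set.range (Fin.append c d)))),
      Nat.card_eq_fintype_card, Fintype.card_sigma]
    have hfib : ∀ d : {d : Fin a → (Fin m → F) //
        LinearIndependent F (Fin.append c d)},
        Fintype.card {x : Fin m → F //
            x ∉ Submodule.span F (Set.range (Fin.append c d.1))} =
          Fintype.card F ^ m - Fintype.card F ^ (t + a) := by
      intro d
      rw [← Nat.card_eq_fintype_card, card_compl_span _ d.2]
    rw [Finset.sum_congr rfl (fun d _ => hfib d), Finset.sum_const, smul_eq_mul,
      Finset.card_univ, ← Nat.card_eq_fintype_card, ext_fin t c hc a,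
      Finset.prod_range_succ]

private lemma ext_sum (ι κ : Type) [Fintype ι] [Fintype κ] (c : ι → (Fin m → F))
    (hc : LinearIndependent F c) :
    Nat.card {d : κ → (Fin m → F) // LinearIndependent F (Sum.elim c d)} =
      ∏ k ∈ range (Fintype.card κ),
        (Fintype.card F ^ m - Fintype.card F ^ (Fintype.card ι + k)) := by
  classical
  set eι := Fintype.equivFin ι
  set eκ := Fintype.equivFin κ
  have hc' : LinearIndependent F (c ∘ eι.symm) := hc.comp _ eι.symm.injective
  have key : ∀ d : κ → (Fin m → F),
      LinearIndependent F (Sum.elim c d) ↔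
      LinearIndependent F (Fin.append (c ∘ eι.symm) (d ∘ eκ.symm)) := by
    intro d
    have h1 : Fin.append (c ∘ ⇑eι.symm) (d ∘ ⇑eκ.symm) =
        Sum.elim c d ∘ ⇑(finSumFinEquiv.symm.trans (Equiv.sumCongr eι.symm eκ.symm)) := by
      funext x
      refine Fin.addCases (fun j => ?_) (fun j => ?_) x
      · simp [Fin.append_left]
      · simp [Fin.append_right]
    rw [h1]
    exact (linearIndependent_equiv _).symm
  have harr : ∀ d : κ → (Fin m → F),
      (Equiv.arrowCongr eκ (Equiv.refl (Fin m → F))) d = d ∘ ⇑eκ.symm := fun d => rfl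
  have e1 : {d : κ → (Fin m → F) // LinearIndependent F (Sum.elim c d)} ≃
      {d' : Fin (Fintype.card κ) → (Fin m → F) //
        LinearIndependent F (Fin.append (c ∘ ⇑eι.symm) d')} :=
    Equiv.subtypeEquiv (Equiv.arrowCongr eκ (Equiv.refl (Fin m → F)))
      (fun d => by rw [harr d]; exact key d)
  rw [Nat.card_congr e1, ext_fin _ _ hc' (Fintype.card κ)]

private lemma card_li (ι : Type) [Fintype ι] (h : Fintype.card ι ≤ m) :
    Nat.card {x : ι → (Fin m → F) // LinearIndependent F x} =
      ∏ k ∈ range (Fintype.card ι),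
        (Fintype.card F ^ m - Fintype.card F ^ k) := by
  classical
  set e := Fintype.equivFin ι
  have e1 : {x : ι → (Fin m → F) // LinearIndependent F x} ≃
      {x : Fin (Fintype.card ι) → (Fin m → F) // LinearIndependent F x} :=
    Equiv.subtypeEquiv (Equiv.arrowCongr e (Equiv.refl (Fin m → F)))
      (fun x => by
        have : (Equiv.arrowCongr e (Equiv.refl (Fin m → F))) x = x ∘ ⇑e.symm := rfl
        rw [this]
        exact (linearIndependent_equiv e.symm).symm)
  have hm : Fintype.card ι ≤ Module.finrank F (Fin m → F) := by
    rwa [Module.finrank_fintype_fun_eq_card, Fintype.card_fin]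
  rw [Nat.card_congr e1, card_linearIndependent hm]
  rw [Module.finrank_fintype_fun_eq_card, Fintype.card_fin,
    ← Fin.prod_univ_eq_prod_range]

private lemma rank_iff {m n : ℕ} (H : Matrix (Fin m) (Fin n) F) (G : Finset (Fin n)) :
    (H.submatrix id ((↑) : G → Fin n)).rank = G.card ↔
      LinearIndependent F fun e : G => fun r => H r ↑e := by
  rw [Matrix.rank_eq_finrank_span_cols, linearIndependent_iff_card_eq_finrank_span,
    Fintype.card_coe, eq_comm]
  unfold Set.finrank
  rfl

private def sigmaEquiv {X Y Z : Type*} (P : X → Prop) (Qy : X → Y → Prop)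
    (Qz : X → Z → Prop) (h1 : ∀ x y, Qy x y → P x) :
    {v : X × Y × Z // Qy v.1 v.2.1 ∧ Qz v.1 v.2.2} ≃
      Σ x : {x // P x}, {y // Qy x.1 y} × {z // Qz x.1 z} where
  toFun v := ⟨⟨v.1.1, h1 _ _ v.2.1⟩, ⟨v.1.2.1, v.2.1⟩, ⟨v.1.2.2, v.2.2⟩⟩
  invFun w := ⟨(w.1.1, w.2.1.1, w.2.2.1), w.2.1.2, w.2.2.2⟩
  left_inv := by rintro ⟨⟨x, y, z⟩, hy, hz⟩; rfl
  right_inv := by rintro ⟨⟨x, hx⟩, ⟨y, hy⟩, ⟨z, hz⟩⟩; rfl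

end Aux

section Split

variable {n : ℕ} {W : Type*}

/-- Split a function on `Fin n` along the partition `E∩E', E\E', E'\E, (E∪E')ᶜ`. -/
private def splitEquiv (E E' : Finset (Fin n)) (W : Type*) :
    (Fin n → W) ≃
      ((((E ∩ E' : Finset (Fin n)) : Type) → W) ×
        (((E \ E' : Finset (Fin n)) : Type) → W) ×
        (((E' \ E : Finset (Fin n)) : Type) → W)) ×
      ((((E ∪ E')ᶜ : Finset (Fin n)) : Type) → W) where
  toFun g := ((fun x => g x, fun x => g x, fun x => g x), fun x => g x)
  invFun t j :=
    if h1 : j ∈ E ∩ E' then t.1.1 ⟨j, h1⟩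
    else if h2 : j ∈ E \ E' then t.1.2.1 ⟨j, h2⟩
    else if h3 : j ∈ E' \ E then t.1.2.2 ⟨j, h3⟩
    else t.2 ⟨j, by
      simp only [Finset.mem_compl, Finset.mem_union, Finset.mem_inter,
        Finset.mem_sdiff] at h1 h2 h3 ⊢
      tauto⟩
  left_inv g := by
    funext j
    dsimp only
    split_ifs <;> rfl
  right_inv t := by
    obtain ⟨⟨x, y, z⟩, w⟩ := t
    refine Prod.ext (Prod.ext ?_ (Prod.ext ?_ ?_)) ?_ <;> funext j <;>
      obtain ⟨j, hj⟩ := j <;> dsimp only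
    · rw [dif_pos hj]
    · have h1 : j ∉ E ∩ E' := by
        simp only [Finset.mem_inter, Finset.mem_sdiff] at hj ⊢; tauto
      rw [dif_neg h1, dif_pos hj]
    · have h1 : j ∉ E ∩ E' := by
        simp only [Finset.mem_inter, Finset.mem_sdiff] at hj ⊢; tauto
      have h2 : j ∉ E \ E' := by
        simp only [Finset.mem_sdiff] at hj ⊢; tauto
      rw [dif_neg h1, dif_neg h2, dif_pos hj]
    · have h0 : j ∉ E ∧ j ∉ E' := by
        simp only [Finset.mem_compl, Finset.mem_union] at hj; tauto
      have h1 : j ∉ E ∩ E' := by simp only [Finset.mem_inter]; tauto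
      have h2 : j ∉ E \ E' := by simp only [Finset.mem_sdiff]; tauto
      have h3 : j ∉ E' \ E := by simp only [Finset.mem_sdiff]; tauto
      rw [dif_neg h1, dif_neg h2, dif_neg h3]

private def unionEquivL (E E' : Finset (Fin n)) :
    (E : Type) ≃ ((E ∩ E' : Finset (Fin n)) : Type) ⊕ ((E \ E' : Finset (Fin n)) : Type) where
  toFun x :=
    if h : ↑x ∈ E' then Sum.inl ⟨x, Finset.mem_inter.2 ⟨x.2, h⟩⟩
    else Sum.inr ⟨x, Finset.mem_sdiff.2 ⟨x.2, h⟩⟩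
  invFun y := Sum.elim (fun z => ⟨z.1, (Finset.mem_inter.1 z.2).1⟩)
    (fun z => ⟨z.1, (Finset.mem_sdiff.1 z.2).1⟩) y
  left_inv x := by dsimp only; split_ifs <;> rfl
  right_inv y := by
    rcases y with z | z
    · simp only [Sum.elim_inl]; exact dif_pos (Finset.mem_inter.1 z.2).2
    · simp only [Sum.elim_inr]; exact dif_neg (Finset.mem_sdiff.1 z.2).2

private def unionEquivR (E E' : Finset (Fin n)) :
    (E' : Type) ≃ ((E ∩ E' : Finset (Fin n)) : Type) ⊕ ((E' \ E : Finset (Fin n)) : Type) where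
  toFun x :=
    if h : ↑x ∈ E then Sum.inl ⟨x, Finset.mem_inter.2 ⟨h, x.2⟩⟩
    else Sum.inr ⟨x, Finset.mem_sdiff.2 ⟨x.2, h⟩⟩
  invFun y := Sum.elim (fun z => ⟨z.1, (Finset.mem_inter.1 z.2).2⟩)
    (fun z => ⟨z.1, (Finset.mem_sdiff.1 z.2).1⟩) y
  left_inv x := by dsimp only; split_ifs <;> rfl
  right_inv y := by
    rcases y with z | z
    · simp only [Sum.elim_inl]; exact dif_pos (Finset.mem_inter.1 z.2).1
    · simp only [Sum.elim_inr]; exact dif_neg (Finset.mem_sdiff.1 z.2).2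

end Split

private lemma psi_formula (q : ℝ) (hq : q ≠ 0) (m j : ℕ) :
    psi q m j = (∏ k ∈ range j, (q ^ m - q ^ k)) / q ^ (m * j) := by
  unfold psi
  have h1 : ∀ k : ℕ, (1 : ℝ) - q ^ ((k : ℤ) - (m : ℤ)) = (q ^ m - q ^ k) / q ^ m := by
    intro k
    rw [zpow_sub₀ hq, zpow_natCast, zpow_natCast, sub_div, div_self (pow_ne_zero _ hq)]
  simp only [h1]
  rw [Finset.prod_div_distrib, Finset.prod_const, Finset.card_range, ← pow_mul]


theorem stmt_3 (q m n i i' s : ℕ) (F : Type) [Field F] [Fintype F]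
    (hq : Fintype.card F = q) (E E' : Finset (Fin n))
    (hE : E.card = i) (hE' : E'.card = i') (hs : (E ∩ E').card = s)
    (hi : i ≤ m) (hi' : i' ≤ m) :
    (Nat.card {H : Matrix (Fin m) (Fin n) F //
        (H.submatrix id ((↑) : E → Fin n)).rank = i ∧
        (H.submatrix id ((↑) : E' → Fin n)).rank = i'} : ℝ) / (q : ℝ) ^ (m * n)
      = psi q m i * psi q m i' / psi q m s := by
  classical
  subst hq
  set q := Fintype.card F with hqdef
  have hq2 : 2 ≤ q := Fintype.one_lt_card
  have hs_le : s ≤ i := by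
    rw [← hE, ← hs]; exact Finset.card_le_card Finset.inter_subset_left
  have hs_le' : s ≤ i' := by
    rw [← hE', ← hs]; exact Finset.card_le_card Finset.inter_subset_right
  have hA : (E \ E').card = i - s := by
    have := Finset.card_sdiff_add_card_inter E E'; omega
  have hB : (E' \ E).card = i' - s := by
    have := Finset.card_sdiff_add_card_inter E' E
    rw [Finset.inter_comm] at this; omega
  set u := (E ∪ E').card with hu
  have hU : u + s = i + i' := by
    have := Finset.card_union_add_card_inter E E'; omega
  have hUn : u ≤ n := by
    have := Finset.card_le_univ (E ∪ E')
    simpa using this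
  have hC : ((E ∪ E')ᶜ : Finset (Fin n)).card = n - u := by
    rw [Finset.card_compl, Fintype.card_fin]
  -- the counting step
  have hcount : Nat.card {H : Matrix (Fin m) (Fin n) F //
        (H.submatrix id ((↑) : E → Fin n)).rank = i ∧
        (H.submatrix id ((↑) : E' → Fin n)).rank = i'} =
      ((∏ k ∈ range s, (q ^ m - q ^ k)) *
        ((∏ k ∈ range (i - s), (q ^ m - q ^ (s + k))) *
          (∏ k ∈ range (i' - s), (q ^ m - q ^ (s + k))))) * q ^ (m * (n - u)) := by
    have hfamL : ∀ g : Fin n → Fin m → F,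
        LinearIndependent F (fun e : E => g ↑e) ↔
        LinearIndependent F (Sum.elim
          (fun x : ((E ∩ E' : Finset (Fin n)) : Type) => g ↑x)
          (fun x : ((E \ E' : Finset (Fin n)) : Type) => g ↑x)) := by
      intro g
      have h1 : (fun e : E => g ↑e) =
          (Sum.elim (fun x : ((E ∩ E' : Finset (Fin n)) : Type) => g ↑x)
            (fun x : ((E \ E' : Finset (Fin n)) : Type) => g ↑x)) ∘ ⇑(unionEquivL E E') := by
        funext e
        show g ↑e = _
        simp only [Function.comp_apply, unionEquivL, Equiv.coe_fn_mk]
        split_ifs <;> rfl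
      rw [h1]
      exact linearIndependent_equiv _
    have hfamR : ∀ g : Fin n → Fin m → F,
        LinearIndependent F (fun e : E' => g ↑e) ↔
        LinearIndependent F (Sum.elim
          (fun x : ((E ∩ E' : Finset (Fin n)) : Type) => g ↑x)
          (fun x : ((E' \ E : Finset (Fin n)) : Type) => g ↑x)) := by
      intro g
      have h1 : (fun e : E' => g ↑e) =
          (Sum.elim (fun x : ((E ∩ E' : Finset (Fin n)) : Type) => g ↑x)
            (fun x : ((E' \ E : Finset (Fin n)) : Type) => g ↑x)) ∘ ⇑(unionEquivR E E') := by
        funext e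
        show g ↑e = _
        simp only [Function.comp_apply, unionEquivR, Equiv.coe_fn_mk]
        split_ifs <;> rfl
      rw [h1]
      exact linearIndependent_equiv _
    let flipE : Matrix (Fin m) (Fin n) F ≃ (Fin n → Fin m → F) :=
      ⟨fun H j r => H r j, fun g r j => g j r, fun _ => rfl, fun _ => rfl⟩
    have e1 : {H : Matrix (Fin m) (Fin n) F //
          (H.submatrix id ((↑) : E → Fin n)).rank = i ∧
          (H.submatrix id ((↑) : E' → Fin n)).rank = i'} ≃
        {g : Fin n → Fin m → F // LinearIndependent F (fun e : E => g ↑e) ∧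
          LinearIndependent F (fun e : E' => g ↑e)} :=
      Equiv.subtypeEquiv flipE (fun H => by
        rw [← hE, ← hE', rank_iff, rank_iff]
        exact Iff.rfl)
    have e2 : {g : Fin n → Fin m → F // LinearIndependent F (fun e : E => g ↑e) ∧
          LinearIndependent F (fun e : E' => g ↑e)} ≃
        {t : ((((E ∩ E' : Finset (Fin n)) : Type) → Fin m → F) ×
              (((E \ E' : Finset (Fin n)) : Type) → Fin m → F) ×
              (((E' \ E : Finset (Fin n)) : Type) → Fin m → F)) ×
             ((((E ∪ E')ᶜ : Finset (Fin n)) : Type) → Fin m → F) //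
          (fun v : ((((E ∩ E' : Finset (Fin n)) : Type) → Fin m → F) ×
              (((E \ E' : Finset (Fin n)) : Type) → Fin m → F) ×
              (((E' \ E : Finset (Fin n)) : Type) → Fin m → F)) =>
            LinearIndependent F (Sum.elim v.1 v.2.1) ∧
            LinearIndependent F (Sum.elim v.1 v.2.2)) t.1 ∧
          (fun _ : (((E ∪ E')ᶜ : Finset (Fin n)) : Type) → Fin m → F => True) t.2} :=
      Equiv.subtypeEquiv (splitEquiv E E' (Fin m → F)) (fun g => by
        constructor
        · rintro ⟨h1, h2⟩
          exact ⟨⟨(hfamL g).1 h1, (hfamR g).1 h2⟩, trivial⟩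
        · rintro ⟨⟨h1, h2⟩, -⟩
          exact ⟨(hfamL g).2 h1, (hfamR g).2 h2⟩)
    have e3 := sigmaEquiv
      (fun x : (((E ∩ E' : Finset (Fin n)) : Type) → Fin m → F) =>
        LinearIndependent F x)
      (fun x (y : ((E \ E' : Finset (Fin n)) : Type) → Fin m → F) =>
        LinearIndependent F (Sum.elim x y))
      (fun x (z : ((E' \ E : Finset (Fin n)) : Type) → Fin m → F) =>
        LinearIndependent F (Sum.elim x z))
      (fun x y h => h.comp Sum.inl Sum.inl_injective)
    have hW : Nat.card ((((E ∪ E')ᶜ : Finset (Fin n)) : Type) → Fin m → F) =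
        q ^ (m * (n - u)) := by
      rw [Nat.card_eq_fintype_card, Fintype.card_fun, cardV, Fintype.card_coe, hC,
        ← pow_mul]
    have hfib : ∀ x : {x : (((E ∩ E' : Finset (Fin n)) : Type) → Fin m → F) //
          LinearIndependent F x},
        Fintype.card
          ({y : ((E \ E' : Finset (Fin n)) : Type) → Fin m → F //
              LinearIndependent F (Sum.elim x.1 y)} ×
           {z : ((E' \ E : Finset (Fin n)) : Type) → Fin m → F //
              LinearIndependent F (Sum.elim x.1 z)}) =
        (∏ k ∈ range (i - s), (q ^ m - q ^ (s + k))) *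
          (∏ k ∈ range (i' - s), (q ^ m - q ^ (s + k))) := by
      intro x
      rw [← Nat.card_eq_fintype_card, Nat.card_prod,
        ext_sum _ _ _ x.2, ext_sum _ _ _ x.2, Fintype.card_coe, Fintype.card_coe,
        Fintype.card_coe, hs, hA, hB]
    have hcardli := card_li (F := F) (m := m)
      (ι := ((E ∩ E' : Finset (Fin n)) : Type))
      (by rw [Fintype.card_coe, hs]; omega)
    have e4 := e2.trans (Equiv.subtypeProdEquivProd
      (p := fun v : ((((E ∩ E' : Finset (Fin n)) : Type) → Fin m → F) ×
              (((E \ E' : Finset (Fin n)) : Type) → Fin m → F) ×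
              (((E' \ E : Finset (Fin n)) : Type) → Fin m → F)) =>
            LinearIndependent F (Sum.elim v.1 v.2.1) ∧
            LinearIndependent F (Sum.elim v.1 v.2.2))
      (q := fun _ : (((E ∪ E')ᶜ : Finset (Fin n)) : Type) → Fin m → F => True))
    rw [Nat.card_congr (e1.trans e4), Nat.card_prod,
      Nat.card_congr (Equiv.subtypeUnivEquiv (fun _ => trivial)),
      Nat.card_congr e3, hW, Nat.card_eq_fintype_card, Fintype.card_sigma,
      Finset.sum_congr rfl (fun x _ => hfib x), Finset.sum_const, smul_eq_mul,
      Finset.card_univ, ← Nat.card_eq_fintype_card, hcardli, Fintype.card_coe, hs]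
  rw [hcount]
  have hq0 : (q : ℝ) ≠ 0 := by
    have : q ≠ 0 := by omega
    exact_mod_cast this
  have hq1 : (1 : ℝ) < (q : ℝ) := by
    have : 1 < q := by omega
    exact_mod_cast this
  have hcast : ∀ (t j : ℕ), t + j ≤ m →
      ((∏ k ∈ range j, (q ^ m - q ^ (t + k)) : ℕ) : ℝ) =
        ∏ k ∈ range j, ((q : ℝ) ^ m - (q : ℝ) ^ (t + k)) := by
    intro t j h
    rw [Nat.cast_prod]
    refine Finset.prod_congr rfl fun k hk => ?_
    rw [Finset.mem_range] at hk
    have hle : q ^ (t + k) ≤ q ^ m := Nat.pow_le_pow_right (by omega) (by omega)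
    rw [Nat.cast_sub hle, Nat.cast_pow, Nat.cast_pow]
  have hcast0 : ∀ j : ℕ, j ≤ m →
      ((∏ k ∈ range j, (q ^ m - q ^ k) : ℕ) : ℝ) =
        ∏ k ∈ range j, ((q : ℝ) ^ m - (q : ℝ) ^ k) := by
    intro j h
    rw [Nat.cast_prod]
    refine Finset.prod_congr rfl fun k hk => ?_
    rw [Finset.mem_range] at hk
    have hle : q ^ k ≤ q ^ m := Nat.pow_le_pow_right (by omega) (by omega)
    rw [Nat.cast_sub hle, Nat.cast_pow, Nat.cast_pow]
  push_cast [hcast0 s (le_trans hs_le hi), hcast s (i - s) (by omega),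
    hcast s (i' - s) (by omega)]
  rw [psi_formula _ hq0 m i, psi_formula _ hq0 m i', psi_formula _ hq0 m s]
  have hPi : (∏ k ∈ range i, ((q : ℝ) ^ m - (q : ℝ) ^ k)) =
      (∏ k ∈ range s, ((q : ℝ) ^ m - (q : ℝ) ^ k)) *
        ∏ k ∈ range (i - s), ((q : ℝ) ^ m - (q : ℝ) ^ (s + k)) := by
    conv_lhs => rw [show i = s + (i - s) by omega]
    rw [Finset.prod_range_add]
  have hPi' : (∏ k ∈ range i', ((q : ℝ) ^ m - (q : ℝ) ^ k)) =
      (∏ k ∈ range s, ((q : ℝ) ^ m - (q : ℝ) ^ k)) *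
        ∏ k ∈ range (i' - s), ((q : ℝ) ^ m - (q : ℝ) ^ (s + k)) := by
    conv_lhs => rw [show i' = s + (i' - s) by omega]
    rw [Finset.prod_range_add]
  have hPs0 : (∏ k ∈ range s, ((q : ℝ) ^ m - (q : ℝ) ^ k)) ≠ 0 := by
    refine Finset.prod_ne_zero_iff.2 fun k hk => ?_
    rw [Finset.mem_range] at hk
    have hlt : (q : ℝ) ^ k < (q : ℝ) ^ m := by
      apply pow_lt_pow_right₀ hq1 (by omega)
    exact sub_ne_zero.2 (ne_of_lt hlt).symm
  have epow3 : ((q : ℝ)) ^ (m * (n - u)) * (((q : ℝ)) ^ (m * i) * ((q : ℝ)) ^ (m * i')) =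
      ((q : ℝ)) ^ (m * s) * ((q : ℝ)) ^ (m * n) := by
    rw [← pow_add, ← pow_add, ← pow_add]
    congr 1
    have h5 : n - u + (i + i') = s + n := by omega
    calc m * (n - u) + (m * i + m * i') = m * ((n - u) + (i + i')) := by ring
      _ = m * (s + n) := by rw [h5]
      _ = m * s + m * n := by ring
  rw [hPi, hPi']
  field_simp
  linear_combination (
    (∏ k ∈ range (i - s), ((q : ℝ) ^ m - (q : ℝ) ^ (s + k))) *
    (∏ k ∈ range (i' - s), ((q : ℝ) ^ m - (q : ℝ) ^ (s + k)))) * epow3
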